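/- Let ρ : ℂ → ℝ be positive and 1-Lipschitz, let r > 0, and let {a_j}_{j≥1} ⊂ ℂ be a sequence such that the disks D(a_j, (r/2)·ρ(a_j)) cover ℂ. Assume there are N ∈ ℕ with the property that every z ∈ ℂ belongs to at most N of the disks D(a_j, r·ρ(a_j)), and Λ ≥ 1 such that ρ(a_k) ≤ Λ·ρ(a_j) whenever D(a_j, r·ρ(a_j)) ∩ D(a_k, r·ρ(a_k)) ≠ ∅. Then there exist C^∞ functions ψ_j : ℂ → [0,1] such that: supp ψ_j ⊆ D(a_j, r·ρ(a_j)) for every j; Σ_j ψ_j(z) = 1 for every z ∈ ℂ; and r·ρ(a_j)·|∂̄ψ_j(z)| ≤ C for all j and all z ∈ ℂ, where C depends only on N and Λ (in particular C is independent of r, j and the points a_j). -/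

import Mathlib

open MeasureTheory Metric Complex ENNReal Set

noncomputable section

lemma exists_deriv_bound : ∃ M : ℝ, 0 ≤ M ∧ ∀ t : ℝ, |deriv Real.smoothTransition t| ≤ M := by
  have hcont : Continuous (deriv Real.smoothTransition) :=
    (Real.smoothTransition.contDiff (n := ⊤)).continuous_deriv (mod_cast le_top)
  obtain ⟨B, hB⟩ := (isCompact_Icc (a := (0:ℝ)) (b := 1)).exists_bound_of_continuousOn
    hcont.continuousOn
  refine ⟨max B 0, le_max_right _ _, fun t => ?_⟩
  rcases le_or_gt t 0 with ht | ht
  · rcases eq_or_lt_of_le ht with rfl | ht'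
    · have := hB 0 (by constructor <;> norm_num)
      simp only [Real.norm_eq_abs] at this
      exact le_trans this (le_max_left _ _)
    · have hz : deriv Real.smoothTransition t = 0 := by
        have hev : Real.smoothTransition =ᶠ[nhds t] fun _ => 0 := by
          filter_upwards [Iio_mem_nhds ht'] with s hs
          exact Real.smoothTransition.zero_of_nonpos (le_of_lt hs)
        rw [hev.deriv_eq, deriv_const]
      simp [hz]
  rcases le_or_gt t 1 with ht1 | ht1
  · have := hB t ⟨le_of_lt ht, ht1⟩
    simp only [Real.norm_eq_abs] at this
    exact le_trans this (le_max_left _ _)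
  · have hz : deriv Real.smoothTransition t = 0 := by
      have hev : Real.smoothTransition =ᶠ[nhds t] fun _ => 1 := by
        filter_upwards [Ioi_mem_nhds ht1] with s hs
        exact Real.smoothTransition.one_of_one_le (le_of_lt hs)
      rw [hev.deriv_eq, deriv_const]
    simp [hz]

/-- smooth bump: equals 1 on closedBall c (R/2), support inside ball c (3R/4). -/
def sbump (R : ℝ) (c z : ℂ) : ℝ :=
  Real.smoothTransition ((9/16*R^2 - ‖z - c‖^2) / (5/16*R^2))

lemma sbump_nonneg (R : ℝ) (c z : ℂ) : 0 ≤ sbump R c z := Real.smoothTransition.nonneg _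

lemma sbump_le_one (R : ℝ) (c z : ℂ) : sbump R c z ≤ 1 := Real.smoothTransition.le_one _

lemma sbump_eq_one {R : ℝ} (hR : 0 < R) {c z : ℂ} (h : dist z c ≤ R / 2) :
    sbump R c z = 1 := by
  apply Real.smoothTransition.one_of_one_le
  rw [le_div_iff₀ (by positivity)]
  have h2 : ‖z - c‖ ^ 2 ≤ (R/2)^2 := by
    rw [← dist_eq_norm]
    exact pow_le_pow_left₀ dist_nonneg h 2
  nlinarith

lemma sbump_ne_zero_imp {R : ℝ} (hR : 0 < R) {c z : ℂ} (h : sbump R c z ≠ 0) :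
    dist z c < 3/4 * R := by
  by_contra hd
  push_neg at hd
  apply h
  apply Real.smoothTransition.zero_of_nonpos
  apply div_nonpos_of_nonpos_of_nonneg _ (by positivity)
  have : (3/4*R)^2 ≤ ‖z - c‖^2 := by
    rw [← dist_eq_norm]
    exact pow_le_pow_left₀ (by positivity) hd 2
  nlinarith

lemma sbump_contDiff {R : ℝ} (c : ℂ) : ContDiff ℝ (⊤ : ℕ∞) (sbump R c) := by
  apply Real.smoothTransition.contDiff.comp
  exact (contDiff_const.sub (((contDiff_id.sub contDiff_const).norm_sq ℝ))).div_const _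

lemma sbump_hasFDerivAt (R : ℝ) (c z : ℂ) :
    HasFDerivAt (sbump R c)
      (deriv Real.smoothTransition ((9/16*R^2 - ‖z - c‖^2) / (5/16*R^2)) •
        ((5/16*R^2)⁻¹ • -((2:ℝ) • innerSL ℝ (z - c)))) z := by
  have hq : HasFDerivAt (fun z : ℂ => ‖z - c‖ ^ 2) ((2:ℝ) • innerSL ℝ (z - c)) z := by
    have h := ((hasFDerivAt_id z).sub_const c).norm_sq
    rw [ContinuousLinearMap.comp_id] at h
    rw [show ((2:ℝ) • innerSL ℝ (z - c)) = (2:ℕ) • innerSL ℝ (z - c) by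
      rw [← Nat.cast_smul_eq_nsmul ℝ (2:ℕ)]; norm_num]
    simpa using h
  have h1 : HasFDerivAt (fun z : ℂ => 9/16*R^2 - ‖z - c‖^2)
      (-((2:ℝ) • innerSL ℝ (z - c))) z := hq.const_sub (9/16*R^2)
  have hg : HasFDerivAt (fun z : ℂ => (9/16*R^2 - ‖z - c‖^2) / (5/16*R^2))
      ((5/16*R^2)⁻¹ • -((2:ℝ) • innerSL ℝ (z - c))) z := by
    simpa only [← div_eq_inv_mul] using h1.const_mul ((5/16*R^2)⁻¹)
  have hst : HasDerivAt Real.smoothTransition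
      (deriv Real.smoothTransition ((9/16*R^2 - ‖z - c‖^2) / (5/16*R^2)))
      ((9/16*R^2 - ‖z - c‖^2) / (5/16*R^2)) :=
    ((Real.smoothTransition.contDiff (n := ⊤)).differentiable (by simp) _).hasDerivAt
  exact hst.comp_hasFDerivAt z hg

lemma sbump_fderiv_eq_zero {R : ℝ} {c z : ℂ} (h : sbump R c z = 0) :
    fderiv ℝ (sbump R c) z = 0 := by
  apply IsLocalMin.fderiv_eq_zero
  apply IsMinOn.isLocalMin _ Filter.univ_mem
  intro w _
  rw [h]
  exact sbump_nonneg R c w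

lemma sbump_fderiv_norm_le {M R : ℝ} (hM : ∀ t, |deriv Real.smoothTransition t| ≤ M)
    (hR : 0 < R) (c z : ℂ) : ‖fderiv ℝ (sbump R c) z‖ ≤ 5 * M / R := by
  have hM0 : 0 ≤ M := le_trans (abs_nonneg _) (hM 0)
  rcases eq_or_ne (sbump R c z) 0 with h | h
  · rw [sbump_fderiv_eq_zero h]
    simp only [norm_zero]
    positivity
  · have hd := sbump_ne_zero_imp hR h
    rw [(sbump_hasFDerivAt R c z).fderiv]
    have hzc : ‖z - c‖ ≤ 3/4 * R := by rw [← dist_eq_norm]; exact le_of_lt hd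
    have hq0 : (0:ℝ) < (5/16*R^2)⁻¹ := by positivity
    rw [norm_smul, norm_smul, norm_neg, norm_smul, innerSL_apply_norm]
    simp only [Real.norm_eq_abs]
    have habs2 : |(2:ℝ)| = 2 := by norm_num
    calc |deriv Real.smoothTransition ((9/16*R^2 - ‖z - c‖^2) / (5/16*R^2))| *
          (|(5/16*R^2)⁻¹| * (|(2:ℝ)| * ‖z - c‖))
        ≤ M * ((5/16*R^2)⁻¹ * (2 * (3/4*R))) := by
          rw [habs2, abs_of_pos hq0]
          gcongr
          exact hM _
      _ = 24*M/(5*R) := by field_simp; ring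
      _ ≤ 5 * M / R := by
          rw [div_le_div_iff₀ (by positivity) hR]
          nlinarith [mul_nonneg hM0 hR.le]

/-- The Wirtinger derivative `∂̄u = (1/2)(∂u/∂x + i ∂u/∂y)`. -/
def dbar (u : ℂ → ℂ) (z : ℂ) : ℂ :=
  (1 / 2 : ℂ) * (fderiv ℝ u z 1 + Complex.I * fderiv ℝ u z Complex.I)

lemma norm_dbar_ofReal_le (f : ℂ → ℝ) (z : ℂ) (h : DifferentiableAt ℝ f z) :
    ‖dbar (fun w => (f w : ℂ)) z‖ ≤ ‖fderiv ℝ f z‖ := by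
  have hc : HasFDerivAt (fun w => ((f w : ℝ) : ℂ)) (Complex.ofRealCLM.comp (fderiv ℝ f z)) z :=
    Complex.ofRealCLM.hasFDerivAt.comp z h.hasFDerivAt
  unfold dbar
  rw [hc.fderiv]
  set D := fderiv ℝ f z with hD
  have key : ∀ x : ℂ, ‖(Complex.ofRealCLM.comp D) x‖ = ‖D x‖ := fun x => by
    simp [ContinuousLinearMap.comp_apply, Complex.norm_real]
  calc ‖(1/2 : ℂ) * ((Complex.ofRealCLM.comp D) 1 +
        Complex.I * (Complex.ofRealCLM.comp D) Complex.I)‖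
      = 1/2 * ‖(Complex.ofRealCLM.comp D) 1 + Complex.I * (Complex.ofRealCLM.comp D) Complex.I‖ := by
        rw [norm_mul]; norm_num
    _ ≤ 1/2 * (‖(Complex.ofRealCLM.comp D) 1‖ + ‖Complex.I * (Complex.ofRealCLM.comp D) Complex.I‖) := by
        gcongr
        exact norm_add_le _ _
    _ = 1/2 * (‖D 1‖ + ‖D Complex.I‖) := by
        rw [norm_mul, Complex.norm_I, one_mul, key, key]
    _ ≤ 1/2 * (‖D‖ * ‖(1:ℂ)‖ + ‖D‖ * ‖Complex.I‖) := by
        gcongr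
        · exact D.le_opNorm 1
        · exact D.le_opNorm Complex.I
    _ = ‖D‖ := by rw [norm_one, Complex.norm_I]; ring

set_option maxHeartbeats 1000000 in
/-- smooth partition of unity subordinate to `{D(a_j, r·ρ(a_j))}`
with a uniform bound on `r·ρ(a_j)·|∂̄ψ_j|`. -/
theorem stmt4 (N : ℕ) (Λ : ℝ) (hΛ : 1 ≤ Λ) :
    ∃ C : ℝ, 0 < C ∧
      ∀ (ρ : ℂ → ℝ) (r : ℝ) (a : ℕ → ℂ),
        (∀ z, 0 < ρ z) → LipschitzWith 1 ρ → 0 < r →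
        (⋃ j, ball (a j) (r / 2 * ρ (a j))) = Set.univ →
        (∀ z : ℂ, ({j | z ∈ ball (a j) (r * ρ (a j))} : Set ℕ).Finite ∧
          ({j | z ∈ ball (a j) (r * ρ (a j))} : Set ℕ).ncard ≤ N) →
        (∀ j k : ℕ, (ball (a j) (r * ρ (a j)) ∩ ball (a k) (r * ρ (a k))).Nonempty →
          ρ (a k) ≤ Λ * ρ (a j)) →
        ∃ ψ : ℕ → ℂ → ℝ,
          (∀ j, ContDiff ℝ (⊤ : ℕ∞) (ψ j)) ∧
          (∀ j z, ψ j z ∈ Set.Icc (0 : ℝ) 1) ∧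
          (∀ j, Function.support (ψ j) ⊆ ball (a j) (r * ρ (a j))) ∧
          (∀ z : ℂ, ∑' j, ψ j z = 1) ∧
          (∀ (j : ℕ) (z : ℂ), r * ρ (a j) * ‖dbar (fun w => (ψ j w : ℂ)) z‖ ≤ C) := by
  obtain ⟨M, hM0, hM⟩ := exists_deriv_bound
  have hN0 : (0:ℝ) ≤ N := Nat.cast_nonneg N
  have hC0 : (0:ℝ) < 5*M*(1+Λ*N) + 1 := by
    have h1 : (0:ℝ) ≤ M*(Λ*N) := mul_nonneg hM0 (mul_nonneg (by linarith) hN0)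
    nlinarith
  refine ⟨5*M*(1+Λ*N) + 1, hC0, ?_⟩
  intro ρ r a hρ hlip hr hcover hFin hcomp
  set R : ℕ → ℝ := fun j => r * ρ (a j) with hRdef
  have hR : ∀ j, 0 < R j := fun j => mul_pos hr (hρ _)
  set χ : ℕ → ℂ → ℝ := fun j => sbump (R j) (a j) with hχdef
  have hχdiff : ∀ k, Differentiable ℝ (χ k) := fun k =>
    (sbump_contDiff (a k)).differentiable (by simp)
  set F : ℂ → Finset ℕ := fun z => (hFin z).1.toFinset with hFdef
  have hFmem : ∀ z k, k ∈ F z ↔ z ∈ ball (a k) (R k) := fun z k => by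
    simp only [hFdef, Set.Finite.mem_toFinset, Set.mem_setOf_eq, hRdef]
  have hFcard : ∀ z, ((F z).card : ℝ) ≤ N := by
    intro z
    have h1 := (hFin z).2
    rw [Set.ncard_eq_toFinset_card _ (hFin z).1] at h1
    exact_mod_cast h1
  -- localization of the supports
  have key : ∀ w : ℂ, ∀ᶠ z in nhds w, ∀ k, χ k z ≠ 0 → k ∈ F w := by
    intro w
    set ε := min (ρ w / 2) (r * ρ w / (8 * (1 + r))) with hεdef
    have h1r : (0:ℝ) < 1 + r := by linarith
    have hε : 0 < ε := lt_min (half_pos (hρ w))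
      (div_pos (mul_pos hr (hρ w)) (by nlinarith))
    filter_upwards [Metric.ball_mem_nhds w hε] with z hz k hk
    have hzw : dist z w < ε := mem_ball.mp hz
    have hzk : dist z (a k) < 3/4 * R k := sbump_ne_zero_imp (hR k) hk
    have hwk : dist w (a k) < ε + 3/4 * R k := by
      calc dist w (a k) ≤ dist w z + dist z (a k) := dist_triangle _ _ _
        _ < ε + 3/4 * R k := by rw [dist_comm w z]; exact add_lt_add hzw hzk
    have hlipk : ρ w - ρ (a k) ≤ dist w (a k) := by
      calc ρ w - ρ (a k) ≤ |ρ w - ρ (a k)| := le_abs_self _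
        _ = dist (ρ w) (ρ (a k)) := (Real.dist_eq _ _).symm
        _ ≤ dist w (a k) := by simpa using hlip.dist_le_mul w (a k)
    have hεle1 : ε ≤ ρ w / 2 := min_le_left _ _
    have hεle2 : ε ≤ r * ρ w / (8 * (1 + r)) := min_le_right _ _
    have hρk : ρ w / (2 * (1 + r)) ≤ ρ (a k) := by
      have h1 : ρ w ≤ ρ (a k) + (ε + 3/4 * (r * ρ (a k))) := by
        have h2 : ρ w ≤ ρ (a k) + (ε + 3/4 * R k) := by linarith
        rwa [show R k = r * ρ (a k) from rfl] at h2
      rw [div_le_iff₀ (by positivity)]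
      nlinarith [h1, hεle1, mul_nonneg hr.le (hρ (a k)).le]
    have hεRk : ε ≤ R k / 4 := by
      calc ε ≤ r * ρ w / (8 * (1 + r)) := hεle2
        _ = (r/4) * (ρ w / (2 * (1 + r))) := by
            rw [div_mul_div_comm, show (4:ℝ)*(2*(1+r)) = 8*(1+r) from by ring]
        _ ≤ (r/4) * ρ (a k) := by
            apply mul_le_mul_of_nonneg_left hρk (by positivity)
        _ = R k / 4 := by rw [show R k = r * ρ (a k) from rfl]; ring
    rw [hFmem, mem_ball]
    calc dist w (a k) < ε + 3/4 * R k := hwk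
      _ ≤ R k / 4 + 3/4 * R k := by linarith
      _ = R k := by ring
  set S : ℂ → ℝ := fun z => ∑' k, χ k z with hSdef
  have hsupp_z : ∀ z k, χ k z ≠ 0 → k ∈ F z := by
    intro z k hk
    rw [hFmem, mem_ball]
    calc dist z (a k) < 3/4 * R k := sbump_ne_zero_imp (hR k) hk
      _ ≤ R k := by linarith [hR k]
  have hS_sum : ∀ w z, (∀ k, χ k z ≠ 0 → k ∈ F w) → S z = ∑ k ∈ F w, χ k z := by
    intro w z h
    exact tsum_eq_sum (fun k hk => by_contra fun h0 => hk (h k h0))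
  have hS_eq : ∀ w, S w = ∑ k ∈ F w, χ k w := fun w => hS_sum w w (hsupp_z w)
  have hS_ev : ∀ w, S =ᶠ[nhds w] fun z => ∑ k ∈ F w, χ k z := by
    intro w
    filter_upwards [key w] with z hz
    exact hS_sum w z hz
  have hS1 : ∀ z, 1 ≤ S z := by
    intro z
    obtain ⟨k, hk⟩ : ∃ k, z ∈ ball (a k) (r/2 * ρ (a k)) := by
      have hz : z ∈ ⋃ j, ball (a j) (r/2 * ρ (a j)) := hcover.symm ▸ Set.mem_univ z
      exact Set.mem_iUnion.mp hz
    have hk1 : χ k z = 1 := by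
      apply sbump_eq_one (hR k)
      have h2 := mem_ball.mp hk
      rw [show R k = r * ρ (a k) from rfl]
      linarith
    have hkF : k ∈ F z := hsupp_z z k (by rw [hk1]; norm_num)
    rw [hS_eq z]
    calc (1:ℝ) = χ k z := hk1.symm
      _ ≤ ∑ k ∈ F z, χ k z := Finset.single_le_sum (fun i _ => sbump_nonneg _ _ _) hkF
  have hSpos : ∀ z, 0 < S z := fun z => lt_of_lt_of_le one_pos (hS1 z)
  have hχS : ∀ j z, χ j z ≤ S z := by
    intro j z
    by_cases hj : χ j z = 0
    · rw [hj]; linarith [hS1 z]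
    · rw [hS_eq z]
      exact Finset.single_le_sum (fun i _ => sbump_nonneg _ _ _) (hsupp_z z j hj)
  have hS_hasF : ∀ z, HasFDerivAt S (∑ k ∈ F z, fderiv ℝ (χ k) z) z := by
    intro z
    have hsum : HasFDerivAt (fun w => ∑ k ∈ F z, χ k w) (∑ k ∈ F z, fderiv ℝ (χ k) z) z :=
      HasFDerivAt.fun_sum (fun k _ => (hχdiff k z).hasFDerivAt)
    exact hsum.congr_of_eventuallyEq (hS_ev z)
  have hS_contAt : ∀ z, ContDiffAt ℝ (⊤ : ℕ∞) S z := by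
    intro z
    apply ContDiffAt.congr_of_eventuallyEq ?_ (hS_ev z)
    exact (ContDiff.sum (fun k _ => sbump_contDiff (a k))).contDiffAt
  refine ⟨fun j z => χ j z / S z, ?_, ?_, ?_, ?_, ?_⟩
  · intro j
    rw [contDiff_iff_contDiffAt]
    intro z
    exact ((sbump_contDiff (a j)).contDiffAt).div (hS_contAt z) (ne_of_gt (hSpos z))
  · intro j z
    constructor
    · exact div_nonneg (sbump_nonneg _ _ _) (hSpos z).le
    · rw [div_le_one (hSpos z)]
      exact hχS j z
  · intro j z hz
    have hχ0 : χ j z ≠ 0 := by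
      intro h0
      apply hz
      simp only [h0, zero_div]
    exact (hFmem z j).mp (hsupp_z z j hχ0)
  · intro z
    have h1 : ∑' j, χ j z / S z = ∑ j ∈ F z, χ j z / S z := by
      apply tsum_eq_sum
      intro j hj
      have h0 : χ j z = 0 := by_contra fun h0 => hj (hsupp_z z j h0)
      rw [h0, zero_div]
    rw [h1, ← Finset.sum_div, ← hS_eq z, div_self (ne_of_gt (hSpos z))]
  · intro j z
    show r * ρ (a j) * ‖dbar (fun w => ((χ j w / S w : ℝ) : ℂ)) z‖ ≤ 5*M*(1+Λ*N) + 1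
    have hinv : HasFDerivAt (fun w => (S w)⁻¹)
        ((-((S z)^2)⁻¹) • (∑ k ∈ F z, fderiv ℝ (χ k) z)) z := by
      have := (hasDerivAt_inv (ne_of_gt (hSpos z))).comp_hasFDerivAt z (hS_hasF z)
      simpa [Function.comp_def] using this
    have hψF : HasFDerivAt (fun w => χ j w / S w)
        (χ j z • ((-((S z)^2)⁻¹) • (∑ k ∈ F z, fderiv ℝ (χ k) z)) +
          (S z)⁻¹ • fderiv ℝ (χ j) z) z := by
      have hmul := ((hχdiff j z).hasFDerivAt).mul hinv
      apply hmul.congr_of_eventuallyEq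
      exact Filter.Eventually.of_forall (fun w => div_eq_mul_inv _ _)
    have hdb := norm_dbar_ofReal_le (fun w => χ j w / S w) z hψF.differentiableAt
    rw [hψF.fderiv] at hdb
    rcases eq_or_ne (χ j z) 0 with hx | hx
    · -- trivial case: the function and its derivative vanish
      have hχ'0 : fderiv ℝ (χ j) z = 0 := sbump_fderiv_eq_zero hx
      have h0 : ‖dbar (fun w => ((χ j w / S w : ℝ) : ℂ)) z‖ = 0 := by
        apply le_antisymm _ (norm_nonneg _)
        rw [hx, hχ'0] at hdb
        simpa using hdb
      rw [h0, mul_zero]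
      exact hC0.le
    · have hjz : z ∈ ball (a j) (R j) := (hFmem z j).mp (hsupp_z z j hx)
      set u := ‖fderiv ℝ (χ j) z‖ with hu
      set v := ‖∑ k ∈ F z, fderiv ℝ (χ k) z‖ with hv
      have hu0 : 0 ≤ u := norm_nonneg _
      have hv0 : 0 ≤ v := norm_nonneg _
      have hs1 := hS1 z
      have hx0 : 0 ≤ χ j z := sbump_nonneg _ _ _
      have hxs := hχS j z
      have hDle : ‖χ j z • ((-((S z)^2)⁻¹) • (∑ k ∈ F z, fderiv ℝ (χ k) z)) +
          (S z)⁻¹ • fderiv ℝ (χ j) z‖ ≤ u + v := by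
        have hstep : ‖χ j z • ((-((S z)^2)⁻¹) • (∑ k ∈ F z, fderiv ℝ (χ k) z)) +
            (S z)⁻¹ • fderiv ℝ (χ j) z‖
            ≤ χ j z * (((S z)^2)⁻¹ * v) + (S z)⁻¹ * u := by
          calc ‖χ j z • ((-((S z)^2)⁻¹) • (∑ k ∈ F z, fderiv ℝ (χ k) z)) +
              (S z)⁻¹ • fderiv ℝ (χ j) z‖
              ≤ ‖χ j z • ((-((S z)^2)⁻¹) • (∑ k ∈ F z, fderiv ℝ (χ k) z))‖ +
                ‖(S z)⁻¹ • fderiv ℝ (χ j) z‖ := norm_add_le _ _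
            _ = χ j z * (((S z)^2)⁻¹ * v) + (S z)⁻¹ * u := by
                rw [norm_smul, norm_smul, norm_smul, norm_neg]
                simp only [Real.norm_eq_abs]
                rw [_root_.abs_of_nonneg hx0,
                  _root_.abs_of_pos (by positivity : (0:ℝ) < ((S z)^2)⁻¹),
                  _root_.abs_of_pos (by positivity : (0:ℝ) < (S z)⁻¹)]
        apply hstep.trans
        have hs0 : 0 < S z := hSpos z
        have hle1 : χ j z * ((S z)^2)⁻¹ ≤ 1 := by
          rw [mul_inv_le_iff₀ (by positivity), one_mul]
          nlinarith [hxs, hs1, hx0]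
        have h1 : χ j z * (((S z)^2)⁻¹ * v) ≤ v := by
          calc χ j z * (((S z)^2)⁻¹ * v) = (χ j z * ((S z)^2)⁻¹) * v := (mul_assoc _ _ _).symm
            _ ≤ 1 * v := mul_le_mul_of_nonneg_right hle1 hv0
            _ = v := one_mul v
        have h2 : (S z)⁻¹ * u ≤ u := by
          have hle2 : (S z)⁻¹ ≤ 1 := by
            rw [inv_le_one_iff₀]; right; exact hs1
          exact mul_le_of_le_one_left hu0 hle2
        linarith
      have hterm : ∀ k ∈ F z, R j * ‖fderiv ℝ (χ k) z‖ ≤ 5*M*Λ := by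
        intro k hk
        have hzk : z ∈ ball (a k) (R k) := (hFmem z k).mp hk
        have hcomp' : ρ (a j) ≤ Λ * ρ (a k) := hcomp k j ⟨z, hzk, hjz⟩
        have hb := sbump_fderiv_norm_le hM (hR k) (a k) z
        calc R j * ‖fderiv ℝ (χ k) z‖ ≤ R j * (5*M/R k) :=
              mul_le_mul_of_nonneg_left hb (hR j).le
          _ = R j * (5*M) / R k := by ring
          _ ≤ 5*M*Λ := by
              rw [div_le_iff₀ (hR k), show R j = r * ρ (a j) from rfl,
                show R k = r * ρ (a k) from rfl]
              nlinarith [mul_nonneg (mul_nonneg hM0 hr.le) (sub_nonneg.2 hcomp'),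
                mul_nonneg (mul_nonneg hM0 hr.le)
                  (mul_nonneg (mul_nonneg (by linarith : (0:ℝ) ≤ Λ) hr.le) (hρ (a k)).le)]
          -- goal: r * ρ (a j) * (5*M) ≤ 5*M*Λ * (r * ρ (a k))
      have hvb : R j * v ≤ N * (5*M*Λ) := by
        calc R j * v ≤ R j * ∑ k ∈ F z, ‖fderiv ℝ (χ k) z‖ :=
              mul_le_mul_of_nonneg_left (norm_sum_le _ _) (hR j).le
          _ = ∑ k ∈ F z, R j * ‖fderiv ℝ (χ k) z‖ := Finset.mul_sum _ _ _
          _ ≤ ∑ _k ∈ F z, 5*M*Λ := Finset.sum_le_sum hterm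
          _ = (F z).card * (5*M*Λ) := by rw [Finset.sum_const, nsmul_eq_mul]
          _ ≤ N * (5*M*Λ) := by
              apply mul_le_mul_of_nonneg_right (hFcard z)
              exact mul_nonneg (by linarith) (by linarith)
      have hub : R j * u ≤ 5*M := by
        have hb := sbump_fderiv_norm_le hM (hR j) (a j) z
        calc R j * u ≤ R j * (5*M/R j) := mul_le_mul_of_nonneg_left hb (hR j).le
          _ = 5*M := by
              rw [← mul_div_assoc, mul_comm (R j) (5*M), mul_div_assoc,
                div_self (hR j).ne', mul_one]
      calc r * ρ (a j) * ‖dbar (fun w => ((χ j w / S w : ℝ) : ℂ)) z‖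
          ≤ R j * (u + v) :=
            mul_le_mul_of_nonneg_left (hdb.trans hDle) (hR j).le
        _ = R j * u + R j * v := by ring
        _ ≤ 5*M + N*(5*M*Λ) := by linarith
        _ ≤ 5*M*(1+Λ*N) + 1 := by nlinarith [hM0]
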